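/- For all integers n and k with 0 ≤ k ≤ n, it holds that C_{n+1,k} ≤ C_{n,k}. -/

import Mathlib

open Finset

/-- Mutual information of a joint distribution `q` on `α × β`, where the output
marginal is supported inside the finite set `Ys`. Terms with zero joint
probability vanish since they are multiplied by `q x y = 0`. -/
noncomputable def MI {α : Type*} [Fintype α] {β : Type*} [DecidableEq β]
    (q : α → β → ℝ) (Ys : Finset β) : ℝ :=
  ∑ x : α, ∑ y ∈ Ys, q x y *
    Real.logb 2 (q x y / ((∑ y' ∈ Ys, q x y') * (∑ x' : α, q x' y)))

/-- `p` is a probability distribution on the finite type `α`. -/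
def IsDist {α : Type*} [Fintype α] (p : α → ℝ) : Prop :=
  (∀ a, 0 ≤ p a) ∧ ∑ a : α, p a = 1

/-- The subsequence of `x` obtained by keeping exactly the positions in `S`. -/
def delOutput {n : ℕ} (x : Fin n → Bool) (S : Finset (Fin n)) : List Bool :=
  (S.sort (· ≤ ·)).map x

/-- All binary strings of length at most `n`. -/
def listsUpTo (n : ℕ) : Finset (List Bool) :=
  (Finset.range (n + 1)).biUnion
    (fun k => Finset.image (fun v : Fin k → Bool => List.ofFn v) Finset.univ)

/-- Transition probability of the binary deletion channel `W_n^d`: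
each bit is deleted independently with probability `d`. -/
noncomputable def Wdel (n : ℕ) (d : ℝ) (x : Fin n → Bool) (y : List Bool) : ℝ :=
  ∑ S : Finset (Fin n),
    if delOutput x S = y then (1 - d) ^ S.card * d ^ (n - S.card) else 0

/-- `C_n(d)`: the supremum of `I(X;Y)` over input distributions on `{0,1}^n`,
where `Y` is the output of the deletion channel `W_n^d` on input `X`. -/
noncomputable def Cdel (n : ℕ) (d : ℝ) : ℝ :=
  sSup { r | ∃ p : (Fin n → Bool) → ℝ, IsDist p ∧
    r = MI (fun x y => p x * Wdel n d x y) (listsUpTo n) }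

/-- Transition probability of the channel `W_{n,k}` which keeps a uniformly
random `k`-element subset of the `n` positions. -/
noncomputable def Wnk (n k : ℕ) (x : Fin n → Bool) (y : List Bool) : ℝ :=
  (∑ S ∈ Finset.powersetCard k (Finset.univ : Finset (Fin n)),
      if delOutput x S = y then (1 : ℝ) else 0) / (n.choose k : ℝ)

/-- `C_{n,k}`: the supremum of `I(X;Y)` over input distributions on `{0,1}^n`,
where `Y` is the output of `W_{n,k}` on input `X`. -/
noncomputable def Cnk (n k : ℕ) : ℝ :=
  sSup { r | ∃ p : (Fin n → Bool) → ℝ, IsDist p ∧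
    r = MI (fun x y => p x * Wnk n k x y) (listsUpTo n) }



section Aux


lemma log_sum_ineq {ι : Type*} (s : Finset ι) (a b : ι → ℝ)
    (ha : ∀ i ∈ s, 0 ≤ a i) (hb : ∀ i ∈ s, 0 ≤ b i)
    (hab : ∀ i ∈ s, b i = 0 → a i = 0) :
    (∑ i ∈ s, a i) * Real.log ((∑ i ∈ s, a i) / (∑ i ∈ s, b i)) ≤
      ∑ i ∈ s, a i * Real.log (a i / b i) := by
  set A := ∑ i ∈ s, a i with hA
  set B := ∑ i ∈ s, b i with hB
  rcases eq_or_lt_of_le (Finset.sum_nonneg ha) with h0 | hApos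
  · -- A = 0
    have hall : ∀ i ∈ s, a i = 0 := by
      intro i hi
      exact (Finset.sum_eq_zero_iff_of_nonneg ha).mp h0.symm i hi
    have hA0 : A = 0 := h0.symm
    rw [hA0]
    simp only [zero_mul]
    apply Finset.sum_nonneg
    intro i hi
    rw [hall i hi]; simp
  · have hBpos : 0 < B := by
      rcases eq_or_lt_of_le (Finset.sum_nonneg hb) with h0 | h
      · exfalso
        have hallb : ∀ i ∈ s, b i = 0 :=
          fun i hi => (Finset.sum_eq_zero_iff_of_nonneg hb).mp h0.symm i hi
        have : A = 0 := Finset.sum_eq_zero fun i hi => hab i hi (hallb i hi)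
        linarith
      · exact h
    -- per-term inequality
    have key : ∀ i ∈ s, a i - A * b i / B ≤ a i * (Real.log (a i / b i) - Real.log (A / B)) := by
      intro i hi
      rcases eq_or_lt_of_le (ha i hi) with h0 | hpos
      · rw [← h0]
        have hbi := hb i hi
        have : 0 ≤ A * b i / B := by positivity
        simp only [zero_mul, zero_sub]
        linarith
      · have hbpos : 0 < b i := by
          rcases eq_or_lt_of_le (hb i hi) with h0 | h
          · exfalso; have := hab i hi h0.symm; linarith
          · exact h
        have hlog : Real.log (a i / b i) - Real.log (A / B) =
            - Real.log ((b i * A) / (a i * B)) := by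
          rw [Real.log_div (by positivity) (by positivity),
              Real.log_div (by positivity) (by positivity),
              Real.log_div (by positivity) (by positivity),
              Real.log_mul (by positivity) (by positivity),
              Real.log_mul (by positivity) (by positivity)]
          ring
        rw [hlog]
        have ht : 0 < (b i * A) / (a i * B) := by positivity
        have := Real.log_le_sub_one_of_pos ht
        have h2 : a i * -Real.log ((b i * A) / (a i * B)) ≥
            a i * (1 - (b i * A) / (a i * B)) := by
          have := mul_le_mul_of_nonneg_left this (le_of_lt hpos)
          nlinarith
        have h3 : a i * (1 - (b i * A) / (a i * B)) = a i - A * b i / B := by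
          field_simp
        linarith
    have hsum := Finset.sum_le_sum key
    have e1 : ∑ i ∈ s, (a i - A * b i / B) = 0 := by
      rw [Finset.sum_sub_distrib]
      rw [← hA]
      have : ∑ i ∈ s, A * b i / B = A * B / B := by
        rw [← Finset.sum_div, ← Finset.mul_sum, ← hB]
      rw [this, mul_div_assoc, div_self (ne_of_gt hBpos), mul_one]
      ring
    have e2 : ∑ i ∈ s, a i * (Real.log (a i / b i) - Real.log (A / B)) =
        (∑ i ∈ s, a i * Real.log (a i / b i)) - A * Real.log (A / B) := by
      simp only [mul_sub]
      rw [Finset.sum_sub_distrib, ← Finset.sum_mul, ← hA]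
    rw [e1, e2] at hsum
    linarith

lemma mem_listsUpTo {n : ℕ} {l : List Bool} : l ∈ listsUpTo n ↔ l.length ≤ n := by
  constructor
  · intro h
    rw [listsUpTo, Finset.mem_biUnion] at h
    obtain ⟨k, hk, hl⟩ := h
    rw [Finset.mem_image] at hl
    obtain ⟨v, _, rfl⟩ := hl
    rw [List.length_ofFn]
    rw [Finset.mem_range] at hk
    omega
  · intro h
    rw [listsUpTo, Finset.mem_biUnion]
    refine ⟨l.length, Finset.mem_range.mpr (by omega), ?_⟩
    rw [Finset.mem_image]
    exact ⟨fun i => l.get i, Finset.mem_univ _, List.ofFn_get l⟩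

lemma delOutput_length {n : ℕ} (x : Fin n → Bool) (S : Finset (Fin n)) :
    (delOutput x S).length = S.card := by
  rw [delOutput, List.length_map, Finset.length_sort]

lemma Wnk_nonneg (n k : ℕ) (x : Fin n → Bool) (y : List Bool) : 0 ≤ Wnk n k x y := by
  apply div_nonneg
  · apply Finset.sum_nonneg
    intro S _
    split <;> norm_num
  · positivity

lemma Wnk_rowsum {n k : ℕ} (hk : k ≤ n) (x : Fin n → Bool) :
    ∑ y ∈ listsUpTo n, Wnk n k x y = 1 := by
  simp only [Wnk, ← Finset.sum_div]
  rw [Finset.sum_comm]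
  have : ∀ S ∈ Finset.powersetCard k (Finset.univ : Finset (Fin n)),
      (∑ y ∈ listsUpTo n, if delOutput x S = y then (1:ℝ) else 0) = 1 := by
    intro S hS
    rw [Finset.sum_ite_eq]
    have hmem : delOutput x S ∈ listsUpTo n := by
      rw [mem_listsUpTo, delOutput_length]
      rw [Finset.mem_powersetCard] at hS
      rw [hS.2]; exact hk
    simp [hmem]
  rw [Finset.sum_congr rfl this, Finset.sum_const, Finset.card_powersetCard, Finset.card_univ,
    Fintype.card_fin, nsmul_eq_mul, mul_one]
  refine div_self ?_
  have := Nat.choose_pos hk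
  positivity

lemma Wnk_zero_of_length {n k : ℕ} (x : Fin n → Bool) {y : List Bool}
    (hlen : y.length ≠ k) : Wnk n k x y = 0 := by
  rw [Wnk]
  have : ∀ S ∈ Finset.powersetCard k (Finset.univ : Finset (Fin n)),
      (if delOutput x S = y then (1:ℝ) else 0) = 0 := by
    intro S hS
    rw [if_neg]
    intro h
    apply hlen
    rw [← h, delOutput_length, (Finset.mem_powersetCard.mp hS).2]
  rw [Finset.sum_congr rfl this, Finset.sum_const, smul_zero, zero_div]

lemma sort_map_succAbove {n : ℕ} (i : Fin (n + 1)) (S : Finset (Fin n)) :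
    (S.map i.succAboveEmb).sort (· ≤ ·) = (S.sort (· ≤ ·)).map i.succAbove := by
  have hperm : List.Perm ((S.map i.succAboveEmb).sort (· ≤ ·)) ((S.sort (· ≤ ·)).map i.succAbove) := by
    rw [← Multiset.coe_eq_coe, Finset.sort_eq, Finset.map_val, ← Multiset.map_coe,
      Finset.sort_eq]
    rfl
  have hs2 : List.Pairwise (· ≤ ·) ((S.sort (· ≤ ·)).map i.succAbove) :=
    List.Pairwise.map _ (fun a b hab => (Fin.strictMono_succAbove i).monotone hab)
      (Finset.pairwise_sort S (· ≤ ·))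
  exact List.Perm.eq_of_pairwise' (Finset.pairwise_sort _ _) hs2 hperm

lemma delOutput_comp {n : ℕ} (i : Fin (n + 1)) (x : Fin (n + 1) → Bool) (S : Finset (Fin n)) :
    delOutput (x ∘ i.succAbove) S = delOutput x (S.map i.succAboveEmb) := by
  rw [delOutput, delOutput, sort_map_succAbove, List.map_map]

lemma powersetCard_map_filter {n k : ℕ} (i : Fin (n + 1)) :
    (Finset.powersetCard k (Finset.univ : Finset (Fin n))).map
       (Finset.mapEmbedding i.succAboveEmb).toEmbedding =
      (Finset.powersetCard k (Finset.univ : Finset (Fin (n + 1)))).filter (fun S => i ∉ S) := by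
  rw [← Finset.powersetCard_map]
  have h1 : (Finset.univ : Finset (Fin n)).map i.succAboveEmb = {i}ᶜ := by
    rw [Finset.map_eq_image]
    exact (Fin.image_succAbove_univ i)
  rw [h1]
  ext S
  simp only [Finset.mem_powersetCard, Finset.mem_filter, Finset.subset_univ, true_and]
  constructor
  · rintro ⟨hsub, hcard⟩
    refine ⟨hcard, fun hi => ?_⟩
    have := hsub hi
    simp at this
  · rintro ⟨hcard, hiS⟩
    refine ⟨fun a ha => ?_, hcard⟩
    simp only [Finset.mem_compl, Finset.mem_singleton]
    rintro rfl
    exact hiS ha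

lemma Wnk_succ {n k : ℕ} (hk : k ≤ n) (x : Fin (n + 1) → Bool) (y : List Bool) :
    Wnk (n + 1) k x y = (∑ i : Fin (n + 1), Wnk n k (x ∘ i.succAbove) y) / (n + 1) := by
  have hnum : ∑ i : Fin (n + 1), ∑ S ∈ Finset.powersetCard k (Finset.univ : Finset (Fin n)),
      (if delOutput (x ∘ i.succAbove) S = y then (1:ℝ) else 0) =
      (n + 1 - k : ℕ) * ∑ S ∈ Finset.powersetCard k (Finset.univ : Finset (Fin (n+1))),
        (if delOutput x S = y then (1:ℝ) else 0) := by
    have step1 : ∀ i : Fin (n + 1),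
        ∑ S ∈ Finset.powersetCard k (Finset.univ : Finset (Fin n)),
          (if delOutput (x ∘ i.succAbove) S = y then (1:ℝ) else 0) =
        ∑ S ∈ (Finset.powersetCard k (Finset.univ : Finset (Fin (n+1)))).filter
            (fun S => i ∉ S), (if delOutput x S = y then (1:ℝ) else 0) := by
      intro i
      rw [← powersetCard_map_filter i, Finset.sum_map]
      apply Finset.sum_congr rfl
      intro S' _
      rw [RelEmbedding.coe_toEmbedding, Finset.mapEmbedding_apply, delOutput_comp]
    simp only [step1, Finset.sum_filter]
    rw [Finset.sum_comm, Finset.mul_sum]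
    apply Finset.sum_congr rfl
    intro S hS
    rw [← Finset.sum_filter, Finset.sum_const]
    have hcompl : Finset.univ.filter (fun i => i ∉ S) = Sᶜ := by
      ext j; simp
    rw [hcompl, Finset.card_compl, Fintype.card_fin,
      (Finset.mem_powersetCard.mp hS).2, nsmul_eq_mul]
  have hsumW : ∑ i : Fin (n + 1), Wnk n k (x ∘ i.succAbove) y =
      (∑ i : Fin (n + 1), ∑ S ∈ Finset.powersetCard k (Finset.univ : Finset (Fin n)),
        (if delOutput (x ∘ i.succAbove) S = y then (1:ℝ) else 0)) / (n.choose k : ℝ) := by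
    simp only [Wnk, Finset.sum_div]
  rw [Wnk, hsumW, hnum]
  have hid : ((n + 1 : ℕ) : ℝ) * ((n.choose k : ℕ) : ℝ) =
      (((n+1).choose k : ℕ) : ℝ) * ((n + 1 - k : ℕ) : ℝ) := by
    have : (n + 1) * n.choose k = (n+1).choose k * (n + 1 - k) := by
      have h1 := Nat.add_one_mul_choose_eq n k
      have h2 := Nat.choose_succ_right_eq (n+1) k
      exact h1.trans h2
    exact_mod_cast congrArg (Nat.cast : ℕ → ℝ) this
  have h1 : ((n.choose k : ℕ) : ℝ) ≠ 0 := by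
    have := Nat.choose_pos hk; positivity
  have h2 : (((n+1).choose k : ℕ) : ℝ) ≠ 0 := by
    have := Nat.choose_pos (le_trans hk (Nat.le_succ n)); positivity
  have h3 : ((n : ℝ) + 1) ≠ 0 := by positivity
  set T := ∑ S ∈ Finset.powersetCard k (Finset.univ : Finset (Fin (n+1))),
    (if delOutput x S = y then (1:ℝ) else 0) with hT
  field_simp
  push_cast at hid ⊢
  linear_combination T * hid


section MIlemmas
variable {α : Type*} [Fintype α] {β : Type*} [DecidableEq β]

/-- Restriction of the output set when the extra outputs have zero probability. -/
lemma MI_subset (q : α → β → ℝ) {Ys Ys' : Finset β} (h : Ys ⊆ Ys')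
    (h0 : ∀ x y, y ∈ Ys' → y ∉ Ys → q x y = 0) : MI q Ys' = MI q Ys := by
  unfold MI
  apply Finset.sum_congr rfl
  intro x _
  have hrow : ∑ y' ∈ Ys', q x y' = ∑ y' ∈ Ys, q x y' :=
    (Finset.sum_subset h (fun y hy hny => h0 x y hy hny)).symm
  rw [hrow]
  apply (Finset.sum_subset h ?_).symm
  intro y hy hny
  rw [h0 x y hy hny, zero_mul]

/-- Upper bound on each term, giving boundedness. -/
lemma MI_le (q : α → β → ℝ) (Ys : Finset β) (hq : ∀ x y, 0 ≤ q x y) :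
    MI q Ys ≤ 2 * (Fintype.card α) * Ys.card := by
  have hterm : ∀ x, ∀ y ∈ Ys, q x y *
      Real.logb 2 (q x y / ((∑ y' ∈ Ys, q x y') * (∑ x' : α, q x' y))) ≤ 2 := by
    intro x y hy
    set t := q x y with ht
    rcases eq_or_lt_of_le (hq x y) with h0 | hpos
    · have h0' : t = 0 := h0.symm
      rw [h0', zero_mul]; norm_num
    · have hrow : t ≤ ∑ y' ∈ Ys, q x y' :=
        Finset.single_le_sum (fun y' _ => hq x y') hy
      have hcol : t ≤ ∑ x' : α, q x' y :=
        Finset.single_le_sum (fun x' _ => hq x' y) (Finset.mem_univ x)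
      have hden : 0 < (∑ y' ∈ Ys, q x y') * (∑ x' : α, q x' y) := by nlinarith
      have harg : t / ((∑ y' ∈ Ys, q x y') * (∑ x' : α, q x' y)) ≤ 1 / t := by
        rw [div_le_div_iff₀ hden hpos]
        nlinarith
      have hlog : Real.logb 2 (t / ((∑ y' ∈ Ys, q x y') * (∑ x' : α, q x' y))) ≤
          Real.logb 2 (1 / t) := by
        exact Real.logb_le_logb_of_le (by norm_num) (by positivity) harg
      have h2 : t * Real.logb 2 (1 / t) ≤ 2 := by
        rw [Real.logb, mul_div_assoc']
        rw [div_le_iff₀ (Real.log_pos (by norm_num))]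
        have hl : Real.log (1 / t) ≤ 1 / t - 1 := Real.log_le_sub_one_of_pos (by positivity)
        have : t * Real.log (1 / t) ≤ t * (1 / t - 1) :=
          mul_le_mul_of_nonneg_left hl (le_of_lt hpos)
        have ht1 : t * (1 / t - 1) = 1 - t := by
          have ht0 : t ≠ 0 := ne_of_gt hpos
          field_simp
        have hlog2 : (0.6931471803 : ℝ) < Real.log 2 := Real.log_two_gt_d9
        nlinarith
      calc t * Real.logb 2 (t / ((∑ y' ∈ Ys, q x y') * (∑ x' : α, q x' y)))
          ≤ t * Real.logb 2 (1 / t) := mul_le_mul_of_nonneg_left hlog (le_of_lt hpos)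
        _ ≤ 2 := h2
  calc MI q Ys ≤ ∑ _x : α, ∑ _y ∈ Ys, (2:ℝ) := by
        apply Finset.sum_le_sum
        intro x _
        exact Finset.sum_le_sum (hterm x)
    _ = 2 * (Fintype.card α) * Ys.card := by
        rw [Finset.sum_const, Finset.sum_const, Finset.card_univ, nsmul_eq_mul, nsmul_eq_mul]
        ring

/-- Point mass input gives zero MI when rows sum to 1. -/
lemma MI_pointmass (W : α → β → ℝ) (Ys : Finset β) (x0 : α) [DecidableEq α]
    (hrow : ∑ y ∈ Ys, W x0 y = 1) :
    MI (fun x y => (if x = x0 then (1:ℝ) else 0) * W x y) Ys = 0 := by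
  unfold MI
  apply Finset.sum_eq_zero
  intro x _
  apply Finset.sum_eq_zero
  intro y hy
  by_cases hx : x = x0
  · subst hx
    have hcol : (∑ x' : α, (if x' = x then (1:ℝ) else 0) * W x' y) = W x y := by
      rw [Finset.sum_eq_single x (fun b _ hb => by simp [hb])
        (fun h => absurd (Finset.mem_univ x) h)]
      simp
    simp only [eq_self_iff_true, if_true, one_mul]
    rw [hcol, hrow, one_mul]
    by_cases hW : W x y = 0
    · rw [hW]; simp
    · rw [div_self hW]; simp
  · simp [hx]


lemma MI_comp_eq {γ : Type*} [Fintype γ] [DecidableEq γ]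
    (f : α → γ) (p : α → ℝ) (hp : ∀ a, 0 ≤ p a) (V : γ → β → ℝ) (Ys : Finset β) :
    MI (fun a y => p a * V (f a) y) Ys =
      MI (fun z y => (∑ a ∈ Finset.univ.filter (fun a => f a = z), p a) * V z y) Ys := by
  classical
  set c : β → ℝ := fun y => ∑ a : α, p a * V (f a) y with hc
  have hcol : ∀ y : β, (∑ z : γ, (∑ a ∈ Finset.univ.filter (fun a => f a = z), p a) * V z y)
      = c y := by
    intro y
    have hcy : c y = ∑ a : α, p a * V (f a) y := rfl
    rw [hcy, ← Finset.sum_fiberwise Finset.univ f (fun a => p a * V (f a) y)]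
    apply Finset.sum_congr rfl
    intro z _
    rw [Finset.sum_mul]
    apply Finset.sum_congr rfl
    intro a ha
    rw [(Finset.mem_filter.mp ha).2]
  set g : γ → ℝ := fun z => ∑ y ∈ Ys, V z y *
    Real.logb 2 (V z y / ((∑ y' ∈ Ys, V z y') * c y)) with hg
  have key : ∀ (w : ℝ), 0 ≤ w → ∀ z : γ,
      (∑ y ∈ Ys, w * V z y *
        Real.logb 2 (w * V z y / ((∑ y' ∈ Ys, w * V z y') * c y))) = w * g z := by
    intro w hw z
    rcases eq_or_lt_of_le hw with h0 | hpos
    · rw [← h0]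
      simp
    · rw [hg, Finset.mul_sum]
      apply Finset.sum_congr rfl
      intro y _
      have hr : (∑ y' ∈ Ys, w * V z y') = w * ∑ y' ∈ Ys, V z y' := by
        rw [Finset.mul_sum]
      rw [hr]
      have harg : w * V z y / (w * (∑ y' ∈ Ys, V z y') * c y) =
          V z y / ((∑ y' ∈ Ys, V z y') * c y) := by
        rw [mul_assoc, mul_div_mul_left _ _ (ne_of_gt hpos)]
      rw [harg]
      ring
  have lhs_eq : MI (fun a y => p a * V (f a) y) Ys = ∑ a : α, p a * g (f a) := by
    unfold MI
    apply Finset.sum_congr rfl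
    intro a _
    exact key (p a) (hp a) (f a)
  have rhs_eq : MI (fun z y => (∑ a ∈ Finset.univ.filter (fun a => f a = z), p a) * V z y) Ys
      = ∑ z : γ, (∑ a ∈ Finset.univ.filter (fun a => f a = z), p a) * g z := by
    unfold MI
    simp only [hcol]
    apply Finset.sum_congr rfl
    intro z _
    exact key _ (Finset.sum_nonneg fun a _ => hp a) z
  rw [lhs_eq, rhs_eq]
  rw [← Finset.sum_fiberwise Finset.univ f (fun a => p a * g (f a))]
  apply Finset.sum_congr rfl
  intro z _
  rw [Finset.sum_mul]
  apply Finset.sum_congr rfl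
  intro a ha
  rw [(Finset.mem_filter.mp ha).2]

lemma MI_merge_le {δ : Type*} [Fintype δ] [DecidableEq δ]
    (g : α → δ) (q : α → β → ℝ) (Ys : Finset β) (hq : ∀ a y, 0 ≤ q a y) :
    MI (fun d y => ∑ a ∈ Finset.univ.filter (fun a => g a = d), q a y) Ys ≤ MI q Ys := by
  classical
  set c : β → ℝ := fun y => ∑ a : α, q a y with hc
  set row : α → ℝ := fun a => ∑ y' ∈ Ys, q a y' with hrow
  have hrownn : ∀ a, 0 ≤ row a := fun a => Finset.sum_nonneg fun y _ => hq a y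
  have hcnn : ∀ y, 0 ≤ c y := fun y => Finset.sum_nonneg fun a _ => hq a y
  have hcolQ : ∀ y : β, (∑ d : δ, ∑ a ∈ Finset.univ.filter (fun a => g a = d), q a y) = c y :=
    fun y => Finset.sum_fiberwise Finset.univ g (fun a => q a y)
  have hrowQ : ∀ d : δ, (∑ y' ∈ Ys, ∑ a ∈ Finset.univ.filter (fun a => g a = d), q a y') =
      ∑ a ∈ Finset.univ.filter (fun a => g a = d), row a := by
    intro d
    rw [Finset.sum_comm]
  have hlog2 : (0:ℝ) < Real.log 2 := Real.log_pos (by norm_num)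
  unfold MI
  simp only [hcolQ, hrowQ]
  have step : ∀ d : δ, ∀ y ∈ Ys,
      (∑ a ∈ Finset.univ.filter (fun a => g a = d), q a y) *
        Real.logb 2 ((∑ a ∈ Finset.univ.filter (fun a => g a = d), q a y) /
          ((∑ a ∈ Finset.univ.filter (fun a => g a = d), row a) * c y)) ≤
      ∑ a ∈ Finset.univ.filter (fun a => g a = d), q a y *
        Real.logb 2 (q a y / (row a * c y)) := by
    intro d y hy
    have hB : (∑ a ∈ Finset.univ.filter (fun a => g a = d), row a * c y) =
        (∑ a ∈ Finset.univ.filter (fun a => g a = d), row a) * c y := by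
      rw [Finset.sum_mul]
    have hls := log_sum_ineq (Finset.univ.filter (fun a => g a = d))
      (fun a => q a y) (fun a => row a * c y)
      (fun a _ => hq a y)
      (fun a _ => mul_nonneg (hrownn a) (hcnn y))
      (by
        intro a _ h0
        rcases mul_eq_zero.mp h0 with h | h
        · have h1 : q a y ≤ row a := Finset.single_le_sum (fun y' _ => hq a y') hy
          have := hq a y
          linarith [h ▸ h1]
        · have h1 : q a y ≤ c y := Finset.single_le_sum (fun a' _ => hq a' y) (Finset.mem_univ a)
          have := hq a y
          linarith [h ▸ h1])
    rw [hB] at hls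
    simp only [Real.logb, mul_div_assoc']
    rw [← Finset.sum_div]
    gcongr
  calc ∑ d : δ, ∑ y ∈ Ys,
      (∑ a ∈ Finset.univ.filter (fun a => g a = d), q a y) *
        Real.logb 2 ((∑ a ∈ Finset.univ.filter (fun a => g a = d), q a y) /
          ((∑ a ∈ Finset.univ.filter (fun a => g a = d), row a) * c y))
      ≤ ∑ d : δ, ∑ y ∈ Ys, ∑ a ∈ Finset.univ.filter (fun a => g a = d),
          q a y * Real.logb 2 (q a y / (row a * c y)) := by
        apply Finset.sum_le_sum
        intro d _
        exact Finset.sum_le_sum (step d)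
    _ = ∑ d : δ, ∑ a ∈ Finset.univ.filter (fun a => g a = d), ∑ y ∈ Ys,
          q a y * Real.logb 2 (q a y / (row a * c y)) := by
        apply Finset.sum_congr rfl
        intro d _
        rw [Finset.sum_comm]
    _ = ∑ a : α, ∑ y ∈ Ys, q a y * Real.logb 2 (q a y / (row a * c y)) :=
        Finset.sum_fiberwise Finset.univ g _

end MIlemmas
end Aux

set_option maxHeartbeats 1000000 in
theorem Cnk_anti (n k : ℕ) (hk : k ≤ n) : Cnk (n + 1) k ≤ Cnk n k := by
  classical
  have hBdd : BddAbove { r | ∃ p : (Fin n → Bool) → ℝ, IsDist p ∧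
      r = MI (fun x y => p x * Wnk n k x y) (listsUpTo n) } := by
    refine ⟨2 * (Fintype.card (Fin n → Bool)) * (listsUpTo n).card, ?_⟩
    rintro r ⟨p, hp, rfl⟩
    exact MI_le _ _ (fun x y => mul_nonneg (hp.1 x) (Wnk_nonneg n k x y))
  have hzero : (0:ℝ) ∈ { r | ∃ p : (Fin n → Bool) → ℝ, IsDist p ∧
      r = MI (fun x y => p x * Wnk n k x y) (listsUpTo n) } := by
    refine ⟨fun x => if x = (fun _ => false) then 1 else 0,
      ⟨fun a => by dsimp only; split <;> norm_num, ?_⟩, ?_⟩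
    · rw [Finset.sum_ite_eq' Finset.univ]
      simp
    · exact (MI_pointmass (Wnk n k) (listsUpTo n) _ (Wnk_rowsum hk _)).symm
  have h0le : (0:ℝ) ≤ Cnk n k := le_csSup hBdd hzero
  rw [Cnk, Cnk]
  apply Real.sSup_le _ h0le
  rintro r ⟨p, hp, rfl⟩
  have hptnn : ∀ a : (Fin (n+1) → Bool) × Fin (n+1), 0 ≤ p a.1 / ((n:ℝ)+1) :=
    fun a => div_nonneg (hp.1 a.1) (by positivity)
  have hsub : listsUpTo n ⊆ listsUpTo (n+1) := by
    intro l hl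
    rw [mem_listsUpTo] at hl ⊢
    omega
  have hstep1 : MI (fun x y => p x * Wnk (n+1) k x y) (listsUpTo (n+1)) =
      MI (fun x y => p x * Wnk (n+1) k x y) (listsUpTo n) := by
    apply MI_subset _ hsub
    intro x y hy hny
    have hlen : y.length ≠ k := by
      rw [mem_listsUpTo] at hy hny
      omega
    rw [Wnk_zero_of_length _ hlen, mul_zero]
  have hq_eq : (fun (x : Fin (n+1) → Bool) (y : List Bool) => p x * Wnk (n+1) k x y) =
      (fun x y => ∑ a ∈ Finset.univ.filter
          (fun a : (Fin (n+1) → Bool) × Fin (n+1) => a.1 = x),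
        (p a.1 / ((n:ℝ)+1)) * Wnk n k (a.1 ∘ a.2.succAbove) y) := by
    funext x y
    have hfib : (Finset.univ.filter (fun a : (Fin (n+1) → Bool) × Fin (n+1) => a.1 = x))
        = {x} ×ˢ Finset.univ := by
      ext a
      simp only [Finset.mem_filter, Finset.mem_univ, true_and, Finset.mem_product,
        Finset.mem_singleton]
      constructor
      · intro h
        exact ⟨h, trivial⟩
      · intro h
        exact h.1
    rw [hfib, Finset.sum_product, Finset.sum_singleton, Wnk_succ hk x y]
    have hterm : ∀ i : Fin (n+1),
        p ((x, i) : (Fin (n+1) → Bool) × Fin (n+1)).1 / ((n:ℝ)+1) *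
          Wnk n k (((x, i) : (Fin (n+1) → Bool) × Fin (n+1)).1 ∘
            ((x, i) : (Fin (n+1) → Bool) × Fin (n+1)).2.succAbove) y =
        p x * Wnk n k (x ∘ i.succAbove) y / ((n:ℝ)+1) := by
      intro i
      show p x / ((n:ℝ)+1) * Wnk n k (x ∘ i.succAbove) y = _
      ring
    rw [Finset.sum_congr rfl (fun i _ => hterm i), ← Finset.sum_div, ← Finset.mul_sum,
      mul_div_assoc]
  have hstep2 : MI (fun x y => p x * Wnk (n+1) k x y) (listsUpTo n) ≤
      MI (fun (a : (Fin (n+1) → Bool) × Fin (n+1)) y =>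
        (p a.1 / ((n:ℝ)+1)) * Wnk n k (a.1 ∘ a.2.succAbove) y) (listsUpTo n) := by
    rw [hq_eq]
    exact MI_merge_le (Prod.fst : (Fin (n+1) → Bool) × Fin (n+1) → (Fin (n+1) → Bool))
      (fun (a : (Fin (n+1) → Bool) × Fin (n+1)) (y : List Bool) =>
        (p a.1 / ((n:ℝ)+1)) * Wnk n k (a.1 ∘ a.2.succAbove) y) (listsUpTo n)
      (fun a y => mul_nonneg (hptnn a) (Wnk_nonneg _ _ _ _))
  have hstep3 := MI_comp_eq (fun a : (Fin (n+1) → Bool) × Fin (n+1) => a.1 ∘ a.2.succAbove)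
    (fun a => p a.1 / ((n:ℝ)+1)) hptnn (Wnk n k) (listsUpTo n)
  rw [hstep1, hq_eq]
  refine le_trans (MI_merge_le (Prod.fst : (Fin (n+1) → Bool) × Fin (n+1) → (Fin (n+1) → Bool))
    (fun (a : (Fin (n+1) → Bool) × Fin (n+1)) (y : List Bool) =>
      (p a.1 / ((n:ℝ)+1)) * Wnk n k (a.1 ∘ a.2.succAbove) y) (listsUpTo n)
    (fun a y => mul_nonneg (hptnn a) (Wnk_nonneg _ _ _ _))) ?_
  rw [hstep3]
  refine le_csSup hBdd ⟨fun z => ∑ a ∈ Finset.univ.filter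
      (fun a : (Fin (n+1) → Bool) × Fin (n+1) => a.1 ∘ a.2.succAbove = z),
      p a.1 / ((n:ℝ)+1), ?dist, rfl⟩
  case dist =>
    constructor
    · intro z
      exact Finset.sum_nonneg fun a _ => hptnn a
    · rw [Finset.sum_fiberwise Finset.univ
        (fun a : (Fin (n+1) → Bool) × Fin (n+1) => a.1 ∘ a.2.succAbove)
        (fun a => p a.1 / ((n:ℝ)+1))]
      rw [Fintype.sum_prod_type]
      have hxs : ∀ x : Fin (n+1) → Bool, (∑ _i : Fin (n+1), p x / ((n:ℝ)+1)) = p x := by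
        intro x
        rw [Finset.sum_const, Finset.card_univ, Fintype.card_fin, nsmul_eq_mul]
        field_simp
        push_cast; ring
      rw [Finset.sum_congr rfl (fun x _ => hxs x)]
      exact hp.2
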